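/- arXiv:1406.0169 — 2 statements merged into one kernel-verified Lean document; each statement's English description precedes it below -/
import Mathlib

section
/- For every p ∈ ℝ³ and every unit vector ω ∈ ℝ³ one has p₀(1 + p̂·ω) = (1 + |p|² − (p·ω)²)/(p₀ − p·ω) ≥ (1 + |p×ω|²)/(2p₀). Consequently |p̂×ω|² ≤ 2(1 + p̂·ω) and 1 + p̂·ω ≥ 1/(2p₀²) (in particular 1 + p̂·ω > 0). -/
noncomputable section

open Real
open scoped RealInnerProductSpace

/-- The momentum space `ℝ³`. -/
abbrev E3 : Type := EuclideanSpace ℝ (Fin 3)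

/-- `p₀ = √(1 + |p|²)`. -/
def p0 (p : E3) : ℝ := Real.sqrt (1 + ‖p‖ ^ 2)

/-- `p̂ = p / p₀`. -/
def phat (p : E3) : E3 := (p0 p)⁻¹ • p

/-- The cross product in `ℝ³`. -/
def cross3 (a b : E3) : E3 :=
  (WithLp.equiv 2 (Fin 3 → ℝ)).symm
    ![a 1 * b 2 - a 2 * b 1, a 2 * b 0 - a 0 * b 2, a 0 * b 1 - a 1 * b 0]

lemma cross_norm_sq (a b : E3) : ‖cross3 a b‖ ^ 2 = ‖a‖ ^ 2 * ‖b‖ ^ 2 - ⟪a, b⟫ ^ 2 := by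
  have h1 : ∀ x : E3, ‖x‖ ^ 2 = ⟪x, x⟫ := fun x => (real_inner_self_eq_norm_sq x).symm
  rw [h1, h1, h1]
  simp [cross3, PiLp.inner_apply, Fin.sum_univ_three, RCLike.inner_apply,
    EuclideanSpace.norm_sq_eq]
  ring

/-- For every `p ∈ ℝ³` and unit `ω ∈ ℝ³`:
`p₀(1 + p̂·ω) = (1 + |p|² − (p·ω)²)/(p₀ − p·ω) ≥ (1 + |p×ω|²)/(2p₀)`, hence
`|p̂×ω|² ≤ 2(1 + p̂·ω)`, `1 + p̂·ω ≥ 1/(2p₀²)`, and in particular `1 + p̂·ω > 0`. -/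
theorem stmt0 (p ω : E3) (hω : ‖ω‖ = 1) :
    p0 p * (1 + ⟪phat p, ω⟫) = (1 + ‖p‖ ^ 2 - ⟪p, ω⟫ ^ 2) / (p0 p - ⟪p, ω⟫) ∧
    p0 p * (1 + ⟪phat p, ω⟫) ≥ (1 + ‖cross3 p ω‖ ^ 2) / (2 * p0 p) ∧
    ‖cross3 (phat p) ω‖ ^ 2 ≤ 2 * (1 + ⟪phat p, ω⟫) ∧
    1 + ⟪phat p, ω⟫ ≥ 1 / (2 * (p0 p) ^ 2) ∧
    0 < 1 + ⟪phat p, ω⟫ := by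
  set P := p0 p with hPdef
  set S := ⟪p, ω⟫ with hSdef
  set N := ‖p‖ with hNdef
  have hNsq : (0:ℝ) ≤ 1 + N ^ 2 := by positivity
  have hPsq : P ^ 2 = 1 + N ^ 2 := Real.sq_sqrt hNsq
  have hP : 0 < P := Real.sqrt_pos.2 (by positivity)
  have hNP : N < P := by
    rw [hPdef, p0]
    exact (Real.lt_sqrt (norm_nonneg p)).2 (by nlinarith)
  have hS : |S| ≤ N := by
    have := abs_real_inner_le_norm p ω
    rwa [hω, mul_one] at this
  have hS1 : -P < S := by
    have := (abs_le.1 hS).1; linarith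
  have hS2 : S < P := by
    have := (abs_le.1 hS).2; linarith
  have hSN : S ^ 2 ≤ N ^ 2 := by
    have := sq_abs S ▸ pow_le_pow_left₀ (abs_nonneg S) hS 2
    simpa [sq_abs] using this
  have hinner : ⟪phat p, ω⟫ = P⁻¹ * S := by
    rw [phat, real_inner_smul_left]
  have hcross : ‖cross3 p ω‖ ^ 2 = N ^ 2 - S ^ 2 := by
    rw [cross_norm_sq, hω]; ring
  have hnphat : ‖phat p‖ = P⁻¹ * N := by
    rw [phat, norm_smul, Real.norm_eq_abs, abs_of_pos (inv_pos.2 hP)]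
  have hcross2 : ‖cross3 (phat p) ω‖ ^ 2 = (P⁻¹ * N) ^ 2 - (P⁻¹ * S) ^ 2 := by
    rw [cross_norm_sq, hω, hnphat, hinner]; ring
  rw [hinner, hcross, hcross2]
  clear hinner hcross hcross2 hnphat hPdef hSdef hNdef hω
  clear_value P S N
  refine ⟨?_, ?_, ?_, ?_, ?_⟩
  · rw [eq_div_iff (sub_ne_zero.2 hS2.ne'), mul_add, mul_one,
      mul_inv_cancel_left₀ hP.ne']
    nlinarith [hPsq]
  · rw [ge_iff_le, div_le_iff₀ (by positivity)]
    have h0 : (0:ℝ) ≤ (P + S) ^ 2 := sq_nonneg _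
    field_simp
    nlinarith [hPsq, h0]
  · 
    have h0 : (0:ℝ) ≤ (P + S) ^ 2 := sq_nonneg _
    rw [sub_le_iff_le_add]
    have key : N ^ 2 - S ^ 2 ≤ 2 * P ^ 2 + 2 * P * S := by nlinarith
    have hP2 : (0:ℝ) < P ^ 2 := by positivity
    rw [show (2:ℝ) * (1 + P⁻¹ * S) + (P⁻¹ * S) ^ 2 =
        (2 * P ^ 2 + 2 * P * S + S ^ 2) / P ^ 2 by field_simp]
    rw [show (P⁻¹ * N) ^ 2 = N ^ 2 / P ^ 2 by field_simp]
    gcongr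
    nlinarith
  · rw [ge_iff_le, div_le_iff₀ (by positivity)]
    have h0 : (0:ℝ) ≤ (P + S) ^ 2 := sq_nonneg _
    have hexp : (1 + P⁻¹ * S) * (2 * P ^ 2) = 2 * P ^ 2 + 2 * P * S := by
      field_simp
    rw [hexp]
    have h0' : (0:ℝ) ≤ P ^ 2 + 2 * P * S + S ^ 2 := by nlinarith [sq_nonneg (P + S)]
    linarith [hPsq, h0', hSN]
  · have heq : P⁻¹ * (P + S) = 1 + P⁻¹ * S := by
      rw [mul_add, inv_mul_cancel₀ hP.ne']
    rw [← heq]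
    exact mul_pos (inv_pos.2 hP) (by linarith)
end
end

section
/- Define, for p ∈ ℝ³, unit ω ∈ ℝ³ and indices i,j ∈ {1,2,3}, H_S^E(ω,p)_{ij} = −(δ_{ij} − p̂_i p̂_j)/(p₀(1 + p̂·ω)) + (ω_i + p̂_i)(ω_j − (ω·p̂) p̂_j)/(p₀(1 + p̂·ω)²) and H_S^B(ω,p)_{ij} = −ω_k ε_{ikj}/(p₀(1 + p̂·ω)) + (ω × p̂)_i p̂_j/(p₀(1 + p̂·ω)) − (ω × p̂)_i (ω_j − (ω·p̂) p̂_j)/(p₀(1 + p̂·ω)²), where ε is the Levi–Civita symbol and repeated indices are summed. Then there is an absolute constant C such that for all p, all unit ω and all i,j: |H_S^E(ω,p)_{ij}| ≤ C/(p₀(1 + p̂·ω)) and |H_S^B(ω,p)_{ij}| ≤ C/(p₀(1 + p̂·ω)). -/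
set_option maxHeartbeats 1000000


noncomputable section

open Real MeasureTheory
open scoped RealInnerProductSpace

/-- The Kronecker delta `δ_{ij}`. -/
def kron (i j : Fin 3) : ℝ := if i = j then 1 else 0

/-- The Levi-Civita symbol `ε_{ijk}` on `{0,1,2}`. -/
def levi (i j k : Fin 3) : ℝ :=
  (((j : ℝ) - (i : ℝ)) * ((k : ℝ) - (i : ℝ)) * ((k : ℝ) - (j : ℝ))) / 2

/-- The Glassey–Strauss kernel
`H_S^E(ω,p)_{ij} = −(δ_{ij} − p̂_i p̂_j)/(p₀(1 + p̂·ω)) + (ω_i + p̂_i)(ω_j − (ω·p̂) p̂_j)/(p₀(1 + p̂·ω)²)`. -/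
def HSE (ω p : E3) (i j : Fin 3) : ℝ :=
  -((kron i j - phat p i * phat p j) / (p0 p * (1 + ⟪phat p, ω⟫)))
    + (ω i + phat p i) * (ω j - ⟪ω, phat p⟫ * phat p j) / (p0 p * (1 + ⟪phat p, ω⟫) ^ 2)

/-- The Glassey–Strauss kernel `H_S^B(ω,p)_{ij} = −ω_k ε_{ikj}/(p₀(1 + p̂·ω))
` `+ (ω × p̂)_i p̂_j/(p₀(1 + p̂·ω)) − (ω × p̂)_i (ω_j − (ω·p̂) p̂_j)/(p₀(1 + p̂·ω)²)`,
with the repeated index `k` summed. -/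
def HSB (ω p : E3) (i j : Fin 3) : ℝ :=
  -((∑ k : Fin 3, ω k * levi i k j) / (p0 p * (1 + ⟪phat p, ω⟫)))
    + cross3 ω (phat p) i * phat p j / (p0 p * (1 + ⟪phat p, ω⟫))
    - cross3 ω (phat p) i * (ω j - ⟪ω, phat p⟫ * phat p j) / (p0 p * (1 + ⟪phat p, ω⟫) ^ 2)

lemma sq_norm_eq (x : E3) : ‖x‖^2 = ∑ k, (x k)^2 := by
  rw [EuclideanSpace.norm_eq, Real.sq_sqrt (by positivity)]
  simp [Real.norm_eq_abs, sq_abs]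

lemma comp_sq (x : E3) (i : Fin 3) : (x i)^2 ≤ ‖x‖^2 := by
  rw [sq_norm_eq]
  exact Finset.single_le_sum (f := fun k => (x k)^2) (fun k _ => sq_nonneg _) (Finset.mem_univ i)

lemma inner3 (x y : E3) : ⟪x, y⟫ = ∑ k, x k * y k := by
  simp [PiLp.inner_apply, RCLike.inner_apply, conj_trivial]
  exact Finset.sum_congr rfl (fun _ _ => mul_comm _ _)

lemma cross_sq (a b : E3) (i : Fin 3) :
    (cross3 a b i)^2 ≤ ‖a‖^2 * ‖b‖^2 - ⟪a, b⟫^2 := by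
  rw [sq_norm_eq, sq_norm_eq, inner3, Fin.sum_univ_three, Fin.sum_univ_three,
    Fin.sum_univ_three]
  fin_cases i <;> simp [cross3] <;>
    nlinarith [sq_nonneg (a 1 * b 2 - a 2 * b 1), sq_nonneg (a 2 * b 0 - a 0 * b 2),
      sq_nonneg (a 0 * b 1 - a 1 * b 0)]

lemma levi_abs_le (a b c : Fin 3) : |levi a b c| ≤ 1 := by
  fin_cases a <;> fin_cases b <;> fin_cases c <;> norm_num [levi]

lemma p0_ge_one (p : E3) : 1 ≤ p0 p := by
  rw [p0]
  nlinarith [Real.sq_sqrt (show (0:ℝ) ≤ 1 + ‖p‖^2 by positivity),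
    Real.sqrt_nonneg (1 + ‖p‖^2), sq_nonneg ‖p‖]

lemma phat_norm_lt (p : E3) : ‖phat p‖ < 1 := by
  have h0 : 0 < p0 p := lt_of_lt_of_le one_pos (p0_ge_one p)
  have hsq : (p0 p)^2 = 1 + ‖p‖^2 := Real.sq_sqrt (by positivity)
  have hlt : ‖p‖ < p0 p := by nlinarith [norm_nonneg p, hsq, h0]
  rw [phat, norm_smul, Real.norm_eq_abs, abs_inv, abs_of_pos h0]
  rw [inv_mul_lt_iff₀ h0, mul_one]
  exact hlt

/-- There is an absolute constant `C` such that for all `p`, all unit `ω` and all `i,j`: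
`|H_S^E(ω,p)_{ij}| ≤ C/(p₀(1 + p̂·ω))` and `|H_S^B(ω,p)_{ij}| ≤ C/(p₀(1 + p̂·ω))`. -/
theorem stmt3 :
    ∃ C : ℝ, 0 < C ∧ ∀ (p ω : E3), ‖ω‖ = 1 → ∀ i j : Fin 3,
      |HSE ω p i j| ≤ C / (p0 p * (1 + ⟪phat p, ω⟫)) ∧
      |HSB ω p i j| ≤ C / (p0 p * (1 + ⟪phat p, ω⟫)) := by
  refine ⟨6, by norm_num, ?_⟩
  intro p ω hω i j
  set q : E3 := phat p with hqdef
  set d : ℝ := p0 p with hddef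
  have hd1 : 1 ≤ d := p0_ge_one p
  have hd0 : 0 < d := by linarith
  have hqn : ‖q‖ < 1 := phat_norm_lt p
  have hqn0 : (0:ℝ) ≤ ‖q‖ := norm_nonneg q
  have hq2 : ‖q‖^2 ≤ 1 := by nlinarith
  set t : ℝ := ⟪ω, q⟫ with htdef
  have hts : ⟪q, ω⟫ = t := by rw [real_inner_comm]
  have ht : |t| < 1 := by
    calc |t| ≤ ‖ω‖ * ‖q‖ := abs_real_inner_le_norm ω q
    _ = ‖q‖ := by rw [hω, one_mul]
    _ < 1 := hqn
  have ht1 := abs_lt.mp ht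
  set s : ℝ := 1 + t with hsdef
  have hs : 0 < s := by simp only [hsdef]; linarith [ht1.1]
  have hD : 0 < d * s := mul_pos hd0 hs
  have hω2 : ‖ω‖^2 = 1 := by rw [hω]; norm_num
  -- component bounds
  have hqle : ∀ k, (q k)^2 ≤ 1 := fun k => le_trans (comp_sq q k) hq2
  have hωle : ∀ k, (ω k)^2 ≤ 1 := fun k => le_trans (comp_sq ω k) (le_of_eq hω2)
  have hωabs : ∀ k, |ω k| ≤ 1 := by
    intro k; rw [abs_le]; constructor <;> nlinarith [hωle k]
  have hqabs : ∀ k, |q k| ≤ 1 := by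
    intro k; rw [abs_le]; constructor <;> nlinarith [hqle k]
  -- x = ω i + q i
  have hx : (ω i + q i)^2 ≤ 2 * s := by
    have h1 := comp_sq (ω + q) i
    have h2 : (ω + q) i = ω i + q i := rfl
    have h3 : ‖ω + q‖^2 = 1 + 2 * t + ‖q‖^2 := by
      rw [norm_add_sq_real, hω2]
    rw [h2] at h1; rw [h3] at h1
    simp only [hsdef]; nlinarith
  -- y = ω j - t * q j
  have hy : (ω j - t * q j)^2 ≤ 2 * s := by
    have h1 := comp_sq (ω - t • q) j
    have h2 : (ω - t • q) j = ω j - t * q j := rfl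
    have h3 : ‖ω - t • q‖^2 = 1 - 2 * t^2 + t^2 * ‖q‖^2 := by
      rw [norm_sub_sq_real, real_inner_smul_right, norm_smul, Real.norm_eq_abs,
        mul_pow, sq_abs, hω2]; ring
    rw [h2] at h1; rw [h3] at h1
    simp only [hsdef]; nlinarith [sq_nonneg t, ht1.1, ht1.2]
  -- cross product bounds
  have hc0 : (cross3 ω q i)^2 ≤ 1 - t^2 := by
    have := cross_sq ω q i
    rw [hω2, ← htdef] at this; nlinarith [sq_nonneg t]
  have hc1 : (cross3 ω q i)^2 ≤ 1 := by nlinarith [sq_nonneg t]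
  have hc2 : (cross3 ω q i)^2 ≤ 2 * s := by
    simp only [hsdef]; nlinarith [ht1.1, ht1.2]
  -- term bounds
  have hA : |kron i j - q i * q j| ≤ 2 := by
    rw [abs_le]; unfold kron; split <;>
      constructor <;> nlinarith [hqle i, hqle j, sq_nonneg (q i + q j), sq_nonneg (q i - q j)]
  have hB : |(ω i + q i) * (ω j - t * q j)| ≤ 2 * s := by
    rw [abs_mul]
    nlinarith [sq_abs (ω i + q i), sq_abs (ω j - t * q j),
      sq_nonneg (|ω i + q i| - |ω j - t * q j|), abs_nonneg (ω i + q i),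
      abs_nonneg (ω j - t * q j)]
  have hFT : |∑ k : Fin 3, ω k * levi i k j| ≤ 3 := by
    have hm : ∀ k : Fin 3, |ω k * levi i k j| ≤ 1 := fun k => by
      rw [abs_mul]; exact mul_le_one₀ (hωabs k) (abs_nonneg _) (levi_abs_le i k j)
    calc |∑ k : Fin 3, ω k * levi i k j| ≤ ∑ k : Fin 3, |ω k * levi i k j| :=
          Finset.abs_sum_le_sum_abs _ _
      _ ≤ 3 := by rw [Fin.sum_univ_three]; linarith [hm 0, hm 1, hm 2]
  have hC1 : |cross3 ω q i * q j| ≤ 1 := by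
    rw [abs_mul]
    have h1 : |cross3 ω q i| ≤ 1 := by
      rw [abs_le]; constructor <;> nlinarith [hc1]
    exact mul_le_one₀ h1 (abs_nonneg _) (hqabs j)
  have hC2 : |cross3 ω q i * (ω j - t * q j)| ≤ 2 * s := by
    rw [abs_mul]
    nlinarith [sq_abs (cross3 ω q i), sq_abs (ω j - t * q j),
      sq_nonneg (|cross3 ω q i| - |ω j - t * q j|), abs_nonneg (cross3 ω q i),
      abs_nonneg (ω j - t * q j)]
  have hdne : d ≠ 0 := ne_of_gt hd0
  have hsne : s ≠ 0 := ne_of_gt hs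
  constructor
  · -- HSE bound
    have key : HSE ω p i j * (d * s^2) =
        -((kron i j - q i * q j) * s) + (ω i + q i) * (ω j - t * q j) := by
      unfold HSE
      rw [← hqdef, ← hddef, hts, ← htdef, ← hsdef]
      field_simp
    have habs : |HSE ω p i j| * (d * s^2) ≤ 6 * s := by
      rw [← abs_of_pos (show (0:ℝ) < d * s^2 by positivity), ← abs_mul, key]
      calc |-((kron i j - q i * q j) * s) + (ω i + q i) * (ω j - t * q j)|
          ≤ |(kron i j - q i * q j) * s| + |(ω i + q i) * (ω j - t * q j)| := by
            have h := abs_add_le (-((kron i j - q i * q j) * s))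
              ((ω i + q i) * (ω j - t * q j))
            rwa [abs_neg] at h
        _ ≤ 2 * s + 2 * s := by
            refine add_le_add ?_ hB
            rw [abs_mul, abs_of_pos hs]
            exact mul_le_mul_of_nonneg_right hA hs.le
        _ ≤ 6 * s := by linarith
    rw [hts, ← hsdef, le_div_iff₀ hD]
    have : |HSE ω p i j| * (d * s) * s ≤ 6 * s := by
      calc |HSE ω p i j| * (d * s) * s = |HSE ω p i j| * (d * s^2) := by ring
        _ ≤ 6 * s := habs
    exact le_of_mul_le_mul_right (by linarith [this]) hs
  · -- HSB bound
    have key : HSB ω p i j * (d * s^2) =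
        -((∑ k : Fin 3, ω k * levi i k j) * s) + cross3 ω q i * q j * s
          - cross3 ω q i * (ω j - t * q j) := by
      unfold HSB
      rw [← hqdef, ← hddef, hts, ← htdef, ← hsdef]
      field_simp
    have habs : |HSB ω p i j| * (d * s^2) ≤ 6 * s := by
      rw [← abs_of_pos (show (0:ℝ) < d * s^2 by positivity), ← abs_mul, key]
      calc |-((∑ k : Fin 3, ω k * levi i k j) * s) + cross3 ω q i * q j * s
            - cross3 ω q i * (ω j - t * q j)|
          ≤ |-((∑ k : Fin 3, ω k * levi i k j) * s) + cross3 ω q i * q j * s|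
            + |cross3 ω q i * (ω j - t * q j)| := abs_sub _ _
        _ ≤ |(∑ k : Fin 3, ω k * levi i k j) * s| + |cross3 ω q i * q j * s|
            + |cross3 ω q i * (ω j - t * q j)| := by
            have := abs_add_le (-((∑ k : Fin 3, ω k * levi i k j) * s)) (cross3 ω q i * q j * s)
            rw [abs_neg] at this; linarith
        _ ≤ 3 * s + 1 * s + 2 * s := by
            refine add_le_add (add_le_add ?_ ?_) hC2
            · rw [abs_mul, abs_of_pos hs]
              exact mul_le_mul_of_nonneg_right hFT hs.le
            · rw [abs_mul, abs_of_pos hs]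
              exact mul_le_mul_of_nonneg_right hC1 hs.le
        _ = 6 * s := by ring
    rw [hts, ← hsdef, le_div_iff₀ hD]
    have : |HSB ω p i j| * (d * s) * s ≤ 6 * s := by
      calc |HSB ω p i j| * (d * s) * s = |HSB ω p i j| * (d * s^2) := by ring
        _ ≤ 6 * s := habs
    exact le_of_mul_le_mul_right (by linarith [this]) hs
end
end
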